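/- arXiv:2206.07141 — 2 statements merged into one kernel-verified Lean document; each statement's English description precedes it below -/
import Mathlib

section
/- Let G be a Hausdorff topological group with subgroups A and B such that C = A ∩ B is an open subgroup of G containing a compact open subgroup of G, and G splits as the amalgamated free product A ∗_C B. If G and C are compactly generated, then A and B (with the subspace topology) are compactly generated. -/
open MulAction

universe u v

/-- A topological group is compactly generated if it has a compact subset that
generates it algebraically. -/
def IsCompactlyGeneratedGroup (G : Type*) [Group G] [TopologicalSpace G] : Prop :=
  ∃ S : Set G, IsCompact S ∧ Subgroup.closure S = ⊤

/-- A topological group `G` is compactly presented if there are a compact generating set `S`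
and `n : ℕ` such that the kernel of the canonical map `FreeGroup S →* G` is generated as a
normal subgroup by its elements of word length at most `n`. -/
def IsCompactlyPresentedGroup (G : Type*) [Group G] [TopologicalSpace G] : Prop :=
  ∃ (S : Set G) (n : ℕ), IsCompact S ∧ Subgroup.closure S = ⊤ ∧
    Subgroup.normalClosure
      {x : FreeGroup S |
        x ∈ (FreeGroup.lift (fun s : S => (s : G))).ker ∧
          ∃ l : List (S × Bool), FreeGroup.mk l = x ∧ l.length ≤ n} =
      (FreeGroup.lift (fun s : S => (s : G))).ker

/-- A topological group is coherent if every closed compactly generated subgroup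
(with the subspace topology) is compactly presented. -/
def IsCoherentGroup (G : Type*) [Group G] [TopologicalSpace G] : Prop :=
  ∀ Q : Subgroup G, IsClosed (Q : Set G) → IsCompactlyGeneratedGroup Q →
    IsCompactlyPresentedGroup Q

section Amalgam

variable {G : Type u} [Group G]

/-- The two-element family of groups `A`, `B`. -/
def amalgamFamily (A B : Subgroup G) : Bool → Type u := fun b => match b with
  | true => A
  | false => B

instance (A B : Subgroup G) : (b : Bool) → Group (amalgamFamily A B b)
  | true => inferInstanceAs (Group A)
  | false => inferInstanceAs (Group B)

/-- The inclusions of `C = A ⊓ B` into `A` and `B`. -/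
def amalgamMaps (A B : Subgroup G) : (b : Bool) → (↥(A ⊓ B) →* amalgamFamily A B b)
  | true => Subgroup.inclusion inf_le_left
  | false => Subgroup.inclusion inf_le_right

/-- The inclusions of `A` and `B` into `G`. -/
def amalgamProj (A B : Subgroup G) : (b : Bool) → (amalgamFamily A B b →* G)
  | true => A.subtype
  | false => B.subtype

/-- The canonical homomorphism from the pushout (in the category of groups) of the
inclusions `A ⊓ B ↪ A` and `A ⊓ B ↪ B` to `G`. -/
def amalgamCanonicalHom (A B : Subgroup G) : Monoid.PushoutI (amalgamMaps A B) →* G :=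
  Monoid.PushoutI.lift (amalgamProj A B) (A ⊓ B).subtype
    (by rintro (_ | _) <;> exact MonoidHom.ext fun x => rfl)

/-- `G` splits as the amalgamated free product `A ∗_(A ⊓ B) B` if the canonical homomorphism
from the pushout of the inclusions to `G` is bijective. -/
def IsAmalgamatedProduct (A B : Subgroup G) : Prop :=
  Function.Bijective (amalgamCanonicalHom A B)

end Amalgam

section Graphs

variable {V : Type v}

/-- The graph obtained from `Γ` by deleting the vertex `v` (making it isolated). -/
def SimpleGraph.deleteVertex (Γ : SimpleGraph V) (v : V) : SimpleGraph V where
  Adj a b := Γ.Adj a b ∧ a ≠ v ∧ b ≠ v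
  symm := ⟨fun a b h => ⟨Γ.symm.symm a b h.1, h.2.2, h.2.1⟩⟩
  loopless := ⟨fun a h => Γ.loopless.irrefl a h.1⟩

/-- `Γ` is fine at `v` if for every neighbour `x` of `v` and every `n`, there are only
finitely many neighbours of `v` joined to `x` by a path of length at most `n` avoiding `v`;
i.e. balls of the angle metric on the neighbours of `v` are finite. -/
def SimpleGraph.FineAt (Γ : SimpleGraph V) (v : V) : Prop :=
  ∀ x ∈ Γ.neighborSet v, ∀ n : ℕ,
    {y | y ∈ Γ.neighborSet v ∧ ∃ p : (Γ.deleteVertex v).Walk x y, p.length ≤ n}.Finite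

/-- A graph is fine if it is fine at every vertex. -/
def SimpleGraph.Fine (Γ : SimpleGraph V) : Prop := ∀ v : V, Γ.FineAt v

/-- A connected graph is hyperbolic if its path metric satisfies the four point condition
up to an additive constant. -/
def SimpleGraph.IsHyperbolic (Γ : SimpleGraph V) : Prop :=
  ∃ δ : ℝ, 0 ≤ δ ∧ ∀ x y z w : V,
    (Γ.dist x y + Γ.dist z w : ℝ) ≤
      max ((Γ.dist x z + Γ.dist y w : ℝ)) ((Γ.dist x w + Γ.dist y z : ℝ)) + δ

/-- Two graphs (with their path metrics) are quasi-isometric. -/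
def QuasiIsometricGraphs {V₁ : Type*} {V₂ : Type*}
    (Γ₁ : SimpleGraph V₁) (Γ₂ : SimpleGraph V₂) : Prop :=
  ∃ (f : V₁ → V₂) (L C : ℝ), 1 ≤ L ∧ 0 ≤ C ∧
    (∀ x y : V₁,
      L⁻¹ * (Γ₁.dist x y : ℝ) - C ≤ (Γ₂.dist (f x) (f y) : ℝ) ∧
      (Γ₂.dist (f x) (f y) : ℝ) ≤ L * (Γ₁.dist x y : ℝ) + C) ∧
    ∀ z : V₂, ∃ x : V₁, (Γ₂.dist z (f x) : ℝ) ≤ C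

end Graphs

section GGraphs

variable (G : Type u) [Group G] [TopologicalSpace G] {V : Type v} [MulAction G V]

/-- The action of `G` on the vertices of `Γ` is by graph automorphisms. -/
def IsGraphAction (Γ : SimpleGraph V) : Prop :=
  ∀ (g : G) (a b : V), Γ.Adj a b → Γ.Adj (g • a) (g • b)

/-- The action is discrete: all vertex stabilizers are open. -/
def IsDiscreteAction (Γ : SimpleGraph V) : Prop :=
  ∀ v : V, IsOpen ((stabilizer G v : Subgroup G) : Set G)

/-- The action is cocompact: finitely many orbits of vertices and of edges. -/
def IsCocompactAction (Γ : SimpleGraph V) : Prop :=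
  (∃ s : Set V, s.Finite ∧ ∀ v : V, ∃ g : G, g • v ∈ s) ∧
  (∃ t : Set (V × V), t.Finite ∧ ∀ a b : V, Γ.Adj a b → ∃ g : G, (g • a, g • b) ∈ t)

/-- Pointwise edge stabilizers are compact. -/
def HasCompactEdgeStabilizers (Γ : SimpleGraph V) : Prop :=
  ∀ a b : V, Γ.Adj a b →
    IsCompact ((stabilizer G a ⊓ stabilizer G b : Subgroup G) : Set G)

/-- The conjugate `g H g⁻¹` of a subgroup. -/
def conjSubgroup {G : Type u} [Group G] (g : G) (H : Subgroup G) : Subgroup G :=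
  Subgroup.map (MulAut.conj g).toMonoidHom H

/-- A proper pair: `G` has a compact open subgroup, `ℋ` is a finite collection of open
subgroups, and no two distinct non-compact members of `ℋ` are conjugate. -/
def IsProperPair (G : Type u) [Group G] [TopologicalSpace G]
    (ℋ : Finset (Subgroup G)) : Prop :=
  (∃ U : Subgroup G, IsCompact (U : Set G) ∧ IsOpen (U : Set G)) ∧
  (∀ H ∈ ℋ, IsOpen ((H : Subgroup G) : Set G)) ∧
  (∀ H ∈ ℋ, ∀ K ∈ ℋ, ¬ IsCompact ((H : Subgroup G) : Set G) →
    ¬ IsCompact ((K : Subgroup G) : Set G) →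
    (∃ g : G, conjSubgroup g H = K) → H = K)

/-- `Γ` is a Cayley-Abels graph of `G` with respect to `ℋ`. -/
def IsCayleyAbelsGraph (ℋ : Finset (Subgroup G)) (Γ : SimpleGraph V) : Prop :=
  IsGraphAction G Γ ∧
  Γ.Connected ∧
  IsDiscreteAction G Γ ∧
  IsCocompactAction G Γ ∧
  HasCompactEdgeStabilizers G Γ ∧
  (∀ v : V, IsCompact ((stabilizer G v : Subgroup G) : Set G) ∨
    ∃ H ∈ ℋ, ∃ g : G, stabilizer G v = conjSubgroup g H) ∧
  (∀ H ∈ ℋ, ∃ v : V, stabilizer G v = H) ∧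
  (∀ H ∈ ℋ, ¬ IsCompact ((H : Subgroup G) : Set G) →
    ∀ u v : V, stabilizer G u = H → stabilizer G v = H → ∃ g : G, g • u = v)

end GGraphs

open Monoid

theorem myList.pmap_id' {α : Type*} {p : α → Prop} (F : ∀ a, p a → α)
    (h : ∀ a ha, F a ha = a) : ∀ (l : List α) (H : ∀ a ∈ l, p a), l.pmap F H = l
  | [], _ => rfl
  | x :: xs, H => by
    simp only [List.pmap, h, myList.pmap_id' F h xs]



section Aux

variable {G : Type u} [Group G]

theorem amalgam_hφ (A B : Subgroup G) :
    ∀ i, Function.Injective (amalgamMaps A B i) := by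
  intro i
  cases i
  · exact Subgroup.inclusion_injective inf_le_right
  · exact Subgroup.inclusion_injective inf_le_left

theorem amalgam_hom_of (A B : Subgroup G) (i : Bool) (g : amalgamFamily A B i) :
    amalgamCanonicalHom A B (Monoid.PushoutI.of i g) = amalgamProj A B i g :=
  Monoid.PushoutI.lift_of _ _ _ _

theorem amalgam_hom_base (A B : Subgroup G) (c : ↥(A ⊓ B)) :
    amalgamCanonicalHom A B (Monoid.PushoutI.base (amalgamMaps A B) c) = (c : G) :=
  Monoid.PushoutI.lift_base _ _ _ _

theorem reduced_fst_eq {ι : Type*} {H : Type*} {Gf : ι → Type*} [∀ i, Group (Gf i)] [Group H]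
    {φ : ∀ i, H →* Gf i} (hφ : ∀ i, Function.Injective (φ i))
    {w w' : Monoid.CoprodI.Word Gf} (hw : Monoid.PushoutI.Reduced φ w)
    (hw' : Monoid.PushoutI.Reduced φ w')
    (h : Monoid.PushoutI.ofCoprodI (φ := φ) w.prod = Monoid.PushoutI.ofCoprodI w'.prod) :
    w.toList.map Sigma.fst = w'.toList.map Sigma.fst := by
  obtain ⟨d⟩ := Monoid.PushoutI.NormalWord.transversal_nonempty (φ := φ) hφ
  obtain ⟨n, hn, hnm⟩ := Monoid.PushoutI.Reduced.exists_normalWord_prod_eq d hw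
  obtain ⟨n', hn', hnm'⟩ := Monoid.PushoutI.Reduced.exists_normalWord_prod_eq d hw'
  have hnn : n = n' := Monoid.PushoutI.NormalWord.prod_injective (by rw [hn, hn', h])
  rw [← hnm, ← hnm', hnn]

end Aux

section Main

variable {G : Type u} [Group G]

theorem exists_alt_list (A₁ B₁ C : Subgroup G) (hCA : C ≤ A₁) (hCB : C ≤ B₁) :
    ∀ (n : ℕ) (l : List G), l.length ≤ n → (∀ x ∈ l, x ∈ A₁ ∨ x ∈ B₁) →
      ∃ (c : G) (l' : List G), c ∈ C ∧
        (∀ x ∈ l', (x ∈ A₁ ∨ x ∈ B₁) ∧ x ∉ C) ∧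
        (l'.Chain' fun a b => ¬(a ∈ A₁ ∧ b ∈ A₁) ∧ ¬(a ∈ B₁ ∧ b ∈ B₁)) ∧
        c * l'.prod = l.prod ∧ l'.length ≤ l.length := by
  intro n
  induction n with
  | zero =>
    intro l hl _
    rw [Nat.le_zero, List.length_eq_zero_iff] at hl
    subst hl
    exact ⟨1, [], one_mem _, by simp, List.isChain_nil, by simp, by simp⟩
  | succ n ih =>
    intro l hl hmem
    match l with
    | [] => exact ⟨1, [], one_mem _, by simp, List.isChain_nil, by simp, by simp⟩
    | x :: xs =>
      have hxs : xs.length ≤ n := by simpa using hl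
      obtain ⟨c₀, m, hc₀, hmemm, hchainm, hprodm, hlenm⟩ :=
        ih xs hxs (fun y hy => hmem y (List.mem_cons_of_mem _ hy))
      have hx := hmem x List.mem_cons_self
      have hx' : x * c₀ ∈ A₁ ∨ x * c₀ ∈ B₁ := by
        rcases hx with h | h
        · exact Or.inl (mul_mem h (hCA hc₀))
        · exact Or.inr (mul_mem h (hCB hc₀))
      have hprodl : (x * c₀) * m.prod = (x :: xs).prod := by
        rw [List.prod_cons, ← hprodm, mul_assoc]
      by_cases hx'C : x * c₀ ∈ C
      · exact ⟨x * c₀, m, hx'C, hmemm, hchainm, hprodl,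
          le_trans hlenm (by simp)⟩
      · cases m with
        | nil =>
          exact ⟨1, [x * c₀], one_mem _,
            by simpa using ⟨hx', hx'C⟩, List.isChain_singleton _, by simpa using hprodl,
            by simp⟩
        | cons y ys =>
          by_cases hsame : (x * c₀ ∈ A₁ ∧ y ∈ A₁) ∨ (x * c₀ ∈ B₁ ∧ y ∈ B₁)
          · have hxy : (x * c₀) * y ∈ A₁ ∨ (x * c₀) * y ∈ B₁ := by
              rcases hsame with ⟨h1, h2⟩ | ⟨h1, h2⟩
              · exact Or.inl (mul_mem h1 h2)
              · exact Or.inr (mul_mem h1 h2)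
            have hlen2 : ((x * c₀ * y) :: ys).length ≤ n := le_trans (by simpa using hlenm) hxs
            obtain ⟨c₁, m₁, hc₁, hmem₁, hchain₁, hprod₁, hlen₁⟩ :=
              ih ((x * c₀ * y) :: ys) hlen2
                (by
                  intro z hz
                  rcases List.mem_cons.1 hz with rfl | hz
                  · exact hxy
                  · exact (hmemm z (List.mem_cons_of_mem _ hz)).1)
            refine ⟨c₁, m₁, hc₁, hmem₁, hchain₁, ?_, ?_⟩
            · rw [hprod₁, ← hprodl, List.prod_cons, List.prod_cons, ← mul_assoc]
            · have h2 : m₁.length ≤ (y :: ys).length := by simpa using hlen₁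
              have h3 : (y :: ys).length ≤ xs.length := by simpa using hlenm
              exact le_trans (le_trans h2 h3) (by simp)
          · push_neg at hsame
            refine ⟨1, (x * c₀) :: y :: ys, one_mem _, ?_, ?_, by simpa using hprodl,
              by simpa using hlenm⟩
            · intro z hz
              rcases List.mem_cons.1 hz with rfl | hz
              · exact ⟨hx', hx'C⟩
              · exact hmemm z hz
            · show List.IsChain _ (_ :: _ :: _)
              rw [List.isChain_cons_cons]
              refine ⟨⟨fun h => hsame.1 h.1 h.2, fun h => hsame.2 h.1 h.2⟩, hchainm⟩

theorem amalgam_alt_cases (A B : Subgroup G) (hsplit : IsAmalgamatedProduct A B)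
    (A₁ B₁ : Subgroup G) (hA₁ : A₁ ≤ A) (hB₁ : B₁ ≤ B) (l : List G)
    (hmem : ∀ x ∈ l, (x ∈ A₁ ∨ x ∈ B₁) ∧ x ∉ A ⊓ B)
    (hchain : l.Chain' fun a b => ¬(a ∈ A₁ ∧ b ∈ A₁) ∧ ¬(a ∈ B₁ ∧ b ∈ B₁)) :
    (l.prod ∈ A → l = [] ∨ ∃ x ∈ A₁, l = [x]) ∧
    (l.prod ∈ B → l = [] ∨ ∃ x ∈ B₁, l = [x]) := by
  classical
  have hφ := amalgam_hφ A B
  have hinj := hsplit.1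
  set φ := amalgamMaps A B with hφdef
  let f : ∀ x : G, ((x ∈ A₁ ∨ x ∈ B₁) ∧ x ∉ A ⊓ B) → (Σ i, amalgamFamily A B i) :=
    fun x hx =>
      if h : x ∈ A₁ then ⟨true, (⟨x, hA₁ h⟩ : A)⟩
      else ⟨false, (⟨x, hB₁ (hx.1.resolve_left h)⟩ : B)⟩
  have hf_pos : ∀ x hx (h : x ∈ A₁), f x hx = ⟨true, (⟨x, hA₁ h⟩ : A)⟩ :=
    fun x hx h => dif_pos h
  have hf_neg : ∀ x hx (h : x ∉ A₁),
      f x hx = ⟨false, (⟨x, hB₁ (hx.1.resolve_left h)⟩ : B)⟩ :=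
    fun x hx h => dif_neg h
  have hf_val : ∀ x hx, amalgamProj A B (f x hx).1 (f x hx).2 = x := by
    intro x hx
    by_cases h : x ∈ A₁
    · rw [hf_pos x hx h]
      rfl
    · rw [hf_neg x hx h]
      rfl
  have hne : ∀ p ∈ l.pmap f hmem, Sigma.snd p ≠ 1 := by
    intro p hp
    rw [List.mem_pmap] at hp
    obtain ⟨x, hx, rfl⟩ := hp
    have hxC := (hmem x hx).2
    by_cases h : x ∈ A₁
    · rw [hf_pos x (hmem x hx) h]
      intro h1
      exact hxC (by rw [show x = 1 from congrArg Subtype.val h1]; exact one_mem _)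
    · rw [hf_neg x (hmem x hx) h]
      intro h1
      exact hxC (by rw [show x = 1 from congrArg Subtype.val h1]; exact one_mem _)
  have hchain2 : (l.pmap f hmem).Chain' (fun p q => p.1 ≠ q.1) := by
    have hc : l.attach.Chain'
        (fun (a b : {x : G // x ∈ l}) =>
          ¬((a : G) ∈ A₁ ∧ (b : G) ∈ A₁) ∧ ¬((a : G) ∈ B₁ ∧ (b : G) ∈ B₁)) := by
      refine List.isChain_of_isChain_map
        (S := fun a b => ¬(a ∈ A₁ ∧ b ∈ A₁) ∧ ¬(a ∈ B₁ ∧ b ∈ B₁))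
        Subtype.val (fun a b h => h) ?_
      rw [List.attach_map_subtype_val]
      exact hchain
    rw [List.pmap_eq_map_attach]
    refine List.isChain_map_of_isChain _ ?_ hc
    rintro ⟨a, ha⟩ ⟨b, hb⟩ hab
    have haAB := (hmem a ha).1
    have hbAB := (hmem b hb).1
    dsimp only
    by_cases h1 : a ∈ A₁ <;> by_cases h2 : b ∈ A₁
    · rw [hf_pos a (hmem a ha) h1, hf_pos b (hmem b hb) h2]
      exact fun _ => hab.1 ⟨h1, h2⟩
    · rw [hf_pos a (hmem a ha) h1, hf_neg b (hmem b hb) h2]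
      exact fun h => Bool.noConfusion h
    · rw [hf_neg a (hmem a ha) h1, hf_pos b (hmem b hb) h2]
      exact fun h => Bool.noConfusion h
    · rw [hf_neg a (hmem a ha) h1, hf_neg b (hmem b hb) h2]
      exact fun _ => hab.2 ⟨haAB.resolve_left h1, hbAB.resolve_left h2⟩
  let w : Monoid.CoprodI.Word (amalgamFamily A B) := ⟨l.pmap f hmem, hne, hchain2⟩
  have hwred : Monoid.PushoutI.Reduced φ w := by
    intro p hp
    replace hp : p ∈ l.pmap f hmem := hp
    rw [List.mem_pmap] at hp
    obtain ⟨x, hx, rfl⟩ := hp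
    have hxC := (hmem x hx).2
    by_cases h : x ∈ A₁
    · rw [hf_pos x (hmem x hx) h]
      rintro ⟨c, hc⟩
      refine hxC ?_
      rw [← show (c : G) = x from congrArg Subtype.val hc]
      exact c.2
    · rw [hf_neg x (hmem x hx) h]
      rintro ⟨c, hc⟩
      refine hxC ?_
      rw [← show (c : G) = x from congrArg Subtype.val hc]
      exact c.2
  have hg : ∀ (x : G) (hx : (x ∈ A₁ ∨ x ∈ B₁) ∧ x ∉ A ⊓ B),
      amalgamCanonicalHom A B (Monoid.PushoutI.ofCoprodI (Monoid.CoprodI.of (f x hx).2)) = x := by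
    intro x hx
    rw [Monoid.PushoutI.ofCoprodI_of, amalgam_hom_of]
    exact hf_val x hx
  have hwprod : amalgamCanonicalHom A B (Monoid.PushoutI.ofCoprodI w.prod) = l.prod := by
    have h0 : w.prod = ((l.pmap f hmem).map fun p => Monoid.CoprodI.of p.2).prod := rfl
    rw [h0, map_list_prod, map_list_prod, List.map_map, List.map_map, List.map_pmap]
    congr 1
    exact myList.pmap_id' _ hg l hmem
  by_cases hCmem : l.prod ∈ A ⊓ B
  · have hwempty : w = Monoid.CoprodI.Word.empty := by
      apply Monoid.PushoutI.Reduced.eq_empty_of_mem_range hφ hwred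
      refine ⟨⟨l.prod, hCmem⟩, ?_⟩
      apply hinj
      rw [amalgam_hom_base, hwprod]
    have hlnil : l = [] := by
      have h1 : (l.pmap f hmem).length = 0 := by
        rw [show l.pmap f hmem = w.toList from rfl, hwempty]
        rfl
      rw [List.length_pmap] at h1
      exact List.length_eq_zero_iff.1 h1
    exact ⟨fun _ => Or.inl hlnil, fun _ => Or.inl hlnil⟩
  · constructor
    · intro hA
      have hne1 : ∀ p ∈ [(⟨true, (⟨l.prod, hA⟩ : A)⟩ : Σ i, amalgamFamily A B i)],
          Sigma.snd p ≠ 1 := by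
        intro p hp
        rw [List.mem_singleton] at hp
        subst hp
        intro h
        exact hCmem (by rw [show l.prod = 1 from congrArg Subtype.val h]; exact one_mem _)
      let w' : Monoid.CoprodI.Word (amalgamFamily A B) :=
        ⟨[⟨true, (⟨l.prod, hA⟩ : A)⟩], hne1, List.isChain_singleton _⟩
      have hw'red : Monoid.PushoutI.Reduced φ w' := by
        intro p hp
        replace hp : p ∈ [(⟨true, (⟨l.prod, hA⟩ : A)⟩ : Σ i, amalgamFamily A B i)] := hp
        rw [List.mem_singleton] at hp
        subst hp
        rintro ⟨c, hc⟩
        refine hCmem ?_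
        rw [← show (c : G) = l.prod from congrArg Subtype.val hc]
        exact c.2
      have heq : Monoid.PushoutI.ofCoprodI (φ := φ) w.prod =
          Monoid.PushoutI.ofCoprodI w'.prod := by
        apply hinj
        rw [hwprod]
        have h0 : w'.prod =
            Monoid.CoprodI.of (show amalgamFamily A B true from ⟨l.prod, hA⟩) := by
          simp [Monoid.CoprodI.Word.prod, w']
        rw [h0, Monoid.PushoutI.ofCoprodI_of, amalgam_hom_of]
        rfl
      have hfst := reduced_fst_eq hφ hwred hw'red heq
      replace hfst : (l.pmap f hmem).map Sigma.fst = [true] := hfst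
      have hlen : l.length = 1 := by
        have := congrArg List.length hfst
        simpa [List.length_pmap] using this
      obtain ⟨x, rfl⟩ := List.length_eq_one_iff.1 hlen
      refine Or.inr ⟨x, ?_, rfl⟩
      have hx : x ∈ [x] := List.mem_singleton_self x
      by_contra hxA
      have h1 : ([x].pmap f hmem).map Sigma.fst = [(f x (hmem x hx)).1] := rfl
      rw [h1] at hfst
      have h2 : (f x (hmem x hx)).1 = false := by rw [hf_neg x (hmem x hx) hxA]
      rw [h2] at hfst
      exact Bool.noConfusion (List.head_eq_of_cons_eq hfst)
    · intro hB
      have hlB : l.prod ∉ A₁ → l.prod ∈ B₁ → True := fun _ _ => trivial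
      have hne1 : ∀ p ∈ [(⟨false, (⟨l.prod, hB⟩ : B)⟩ : Σ i, amalgamFamily A B i)],
          Sigma.snd p ≠ 1 := by
        intro p hp
        rw [List.mem_singleton] at hp
        subst hp
        intro h
        exact hCmem (by rw [show l.prod = 1 from congrArg Subtype.val h]; exact one_mem _)
      let w' : Monoid.CoprodI.Word (amalgamFamily A B) :=
        ⟨[⟨false, (⟨l.prod, hB⟩ : B)⟩], hne1, List.isChain_singleton _⟩
      have hw'red : Monoid.PushoutI.Reduced φ w' := by
        intro p hp
        replace hp : p ∈ [(⟨false, (⟨l.prod, hB⟩ : B)⟩ : Σ i, amalgamFamily A B i)] := hp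
        rw [List.mem_singleton] at hp
        subst hp
        rintro ⟨c, hc⟩
        refine hCmem ?_
        rw [← show (c : G) = l.prod from congrArg Subtype.val hc]
        exact c.2
      have heq : Monoid.PushoutI.ofCoprodI (φ := φ) w.prod =
          Monoid.PushoutI.ofCoprodI w'.prod := by
        apply hinj
        rw [hwprod]
        have h0 : w'.prod =
            Monoid.CoprodI.of (show amalgamFamily A B false from ⟨l.prod, hB⟩) := by
          simp [Monoid.CoprodI.Word.prod, w']
        rw [h0, Monoid.PushoutI.ofCoprodI_of, amalgam_hom_of]
        rfl
      have hfst := reduced_fst_eq hφ hwred hw'red heq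
      replace hfst : (l.pmap f hmem).map Sigma.fst = [false] := hfst
      have hlen : l.length = 1 := by
        have := congrArg List.length hfst
        simpa [List.length_pmap] using this
      obtain ⟨x, rfl⟩ := List.length_eq_one_iff.1 hlen
      have hx : x ∈ [x] := List.mem_singleton_self x
      refine Or.inr ⟨x, ?_, rfl⟩
      by_contra hxB
      have hxA : x ∈ A₁ := (hmem x hx).1.resolve_right hxB
      have h1 : ([x].pmap f hmem).map Sigma.fst = [(f x (hmem x hx)).1] := rfl
      rw [h1] at hfst
      have h2 : (f x (hmem x hx)).1 = true := by rw [hf_pos x (hmem x hx) hxA]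
      rw [h2] at hfst
      exact Bool.noConfusion (List.head_eq_of_cons_eq hfst)

theorem mem_closure_union_list (A₁ B₁ : Subgroup G) (g : G)
    (hg : g ∈ Subgroup.closure ((A₁ : Set G) ∪ B₁)) :
    ∃ l : List G, (∀ x ∈ l, x ∈ A₁ ∨ x ∈ B₁) ∧ l.prod = g := by
  refine Subgroup.closure_induction
    (p := fun x _ => ∃ l : List G, (∀ y ∈ l, y ∈ A₁ ∨ y ∈ B₁) ∧ l.prod = x)
    ?_ ?_ ?_ ?_ hg
  · intro x hx
    refine ⟨[x], ?_, by simp⟩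
    intro y hy
    rw [List.mem_singleton] at hy
    subst hy
    exact hx
  · exact ⟨[], by simp, by simp⟩
  · rintro x y hx hy ⟨lx, hlx, rfl⟩ ⟨ly, hly, rfl⟩
    refine ⟨lx ++ ly, ?_, by rw [List.prod_append]⟩
    intro z hz
    rcases List.mem_append.1 hz with h | h
    · exact hlx z h
    · exact hly z h
  · rintro x hx ⟨lx, hlx, rfl⟩
    refine ⟨(lx.map fun z => z⁻¹).reverse, ?_, (List.prod_inv_reverse lx).symm⟩
    intro z hz
    rw [List.mem_reverse, List.mem_map] at hz
    obtain ⟨y, hy, rfl⟩ := hz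
    rcases hlx y hy with h | h
    · exact Or.inl (inv_mem h)
    · exact Or.inr (inv_mem h)

theorem factors_eq (A B A₁ B₁ : Subgroup G) (hsplit : IsAmalgamatedProduct A B)
    (hA₁ : A₁ ≤ A) (hB₁ : B₁ ≤ B) (hCA : A ⊓ B ≤ A₁) (hCB : A ⊓ B ≤ B₁)
    (htop : Subgroup.closure ((A₁ : Set G) ∪ B₁) = ⊤) : A ≤ A₁ ∧ B ≤ B₁ := by
  have key : ∀ g : G, (g ∈ A → g ∈ A₁) ∧ (g ∈ B → g ∈ B₁) := by
    intro g
    obtain ⟨l, hlmem, hlprod⟩ :=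
      mem_closure_union_list A₁ B₁ g (htop ▸ Subgroup.mem_top g)
    obtain ⟨c, l', hc, hmem', hchain', hprod', -⟩ :=
      exists_alt_list A₁ B₁ (A ⊓ B) hCA hCB l.length l le_rfl hlmem
    have halt := amalgam_alt_cases A B hsplit A₁ B₁ hA₁ hB₁ l' hmem' hchain'
    constructor
    · intro hgA
      have hl'A : l'.prod ∈ A := by
        have h0 : l'.prod = c⁻¹ * g := by rw [← hlprod, ← hprod']; group
        rw [h0]
        exact mul_mem (inv_mem ((inf_le_left : A ⊓ B ≤ A) hc)) hgA
      rcases halt.1 hl'A with rfl | ⟨x, hxA₁, rfl⟩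
      · have h0 : g = c := by rw [← hlprod, ← hprod']; simp
        rw [h0]; exact hCA hc
      · have h0 : g = c * x := by rw [← hlprod, ← hprod']; simp
        rw [h0]; exact mul_mem (hCA hc) hxA₁
    · intro hgB
      have hl'B : l'.prod ∈ B := by
        have h0 : l'.prod = c⁻¹ * g := by rw [← hlprod, ← hprod']; group
        rw [h0]
        exact mul_mem (inv_mem ((inf_le_right : A ⊓ B ≤ B) hc)) hgB
      rcases halt.2 hl'B with rfl | ⟨x, hxB₁, rfl⟩
      · have h0 : g = c := by rw [← hlprod, ← hprod']; simp
        rw [h0]; exact hCB hc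
      · have h0 : g = c * x := by rw [← hlprod, ← hprod']; simp
        rw [h0]; exact mul_mem (hCB hc) hxB₁
  exact ⟨fun g hg => (key g).1 hg, fun g hg => (key g).2 hg⟩

theorem cg_of_closure {G : Type u} [Group G] [TopologicalSpace G] [IsTopologicalGroup G]
    (C A : Subgroup G) (hCA : C ≤ A) (SC : Set ↥C) (hSC : IsCompact SC)
    (hSCgen : Subgroup.closure SC = ⊤) (F : Set G) (hF : F.Finite) (hFA : F ⊆ ↑A)
    (hgen : Subgroup.closure ((C : Set G) ∪ F) = A) :
    IsCompactlyGeneratedGroup ↥A := by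
  refine ⟨(fun x : ↥C => (⟨↑x, hCA x.2⟩ : ↥A)) '' SC ∪ {x : ↥A | ↑x ∈ F}, ?_, ?_⟩
  · refine IsCompact.union (hSC.image ?_) ?_
    · exact Continuous.subtype_mk continuous_subtype_val _
    · exact Set.Finite.isCompact (hF.preimage Subtype.val_injective.injOn)
  · apply Subgroup.map_injective A.subtype_injective
    rw [MonoidHom.map_closure, Set.image_union]
    have h1 : A.subtype '' ((fun x : ↥C => (⟨↑x, hCA x.2⟩ : ↥A)) '' SC)
        = C.subtype '' SC := by
      rw [Set.image_image]
      rfl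
    have h2 : A.subtype '' {x : ↥A | ↑x ∈ F} = F := by
      apply Set.eq_of_subset_of_subset
      · rintro y ⟨x, hx, rfl⟩
        exact hx
      · intro y hy
        exact ⟨⟨y, hFA hy⟩, hy, rfl⟩
    rw [h1, h2, Subgroup.closure_union, ← MonoidHom.map_closure, hSCgen,
      ← MonoidHom.range_eq_map, Subgroup.range_subtype,
      ← MonoidHom.range_eq_map, Subgroup.range_subtype,
      ← hgen, Subgroup.closure_union, Subgroup.closure_eq]

end Main



/-- If `G` splits as an amalgamated free product of subgroups `A` and `B` over `C = A ⊓ B`,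
where `C` is open and contains a compact open subgroup of `G`, and `G` and `C` are
compactly generated, then `A` and `B` are compactly generated. -/
theorem isCompactlyGenerated_factors_of_amalgamatedProduct
    {G : Type u} [Group G] [TopologicalSpace G] [IsTopologicalGroup G] [T2Space G]
    (A B : Subgroup G)
    (hCopen : IsOpen ((A ⊓ B : Subgroup G) : Set G))
    (hU : ∃ U : Subgroup G, IsCompact (U : Set G) ∧ IsOpen (U : Set G) ∧ U ≤ A ⊓ B)
    (hsplit : IsAmalgamatedProduct A B)
    (hG : IsCompactlyGeneratedGroup G)
    (hC : IsCompactlyGeneratedGroup ↥(A ⊓ B)) :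
    IsCompactlyGeneratedGroup A ∧ IsCompactlyGeneratedGroup B := by
  classical
  obtain ⟨S, hScomp, hSgen⟩ := hG
  obtain ⟨SC, hSCcomp, hSCgen⟩ := hC
  have hABtop : Subgroup.closure ((A : Set G) ∪ (B : Set G)) = ⊤ := by
    rw [eq_top_iff]
    rintro g -
    obtain ⟨p, rfl⟩ := hsplit.2 g
    induction p using Monoid.PushoutI.induction_on with
    | of i g' =>
      rw [amalgam_hom_of]
      cases i
      · exact Subgroup.subset_closure (Or.inr g'.2)
      · exact Subgroup.subset_closure (Or.inl g'.2)
    | base h =>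
      rw [amalgam_hom_base]
      exact Subgroup.subset_closure (Or.inl (Subgroup.mem_inf.1 h.2).1)
    | mul x y hx hy =>
      rw [map_mul]
      exact mul_mem hx hy
  choose dec hdec1 hdec2 using fun g =>
    mem_closure_union_list A B g (hABtop ▸ Subgroup.mem_top g)
  obtain ⟨t, ht⟩ := hScomp.elim_finite_subcover
    (fun g : G => (fun x => g⁻¹ * x) ⁻¹' (↑(A ⊓ B) : Set G))
    (fun g => hCopen.preimage (continuous_const.mul continuous_id))
    (fun x _ => Set.mem_iUnion.2
      ⟨x, show x⁻¹ * x ∈ (↑(A ⊓ B) : Set G) from by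
        rw [inv_mul_cancel]; exact (A ⊓ B).one_mem⟩)
  set F : Set G := ⋃ g ∈ (↑t : Set G), {x | x ∈ dec g} with hFdef
  have hFfin : F.Finite :=
    Set.Finite.biUnion t.finite_toSet (fun g _ => (dec g).finite_toSet)
  have hA₁A : Subgroup.closure ((↑(A ⊓ B) : Set G) ∪ (F ∩ ↑A)) ≤ A := by
    rw [Subgroup.closure_le]
    refine Set.union_subset ?_ Set.inter_subset_right
    intro x hx
    exact (inf_le_left : A ⊓ B ≤ A) hx
  have hB₁B : Subgroup.closure ((↑(A ⊓ B) : Set G) ∪ (F ∩ ↑B)) ≤ B := by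
    rw [Subgroup.closure_le]
    refine Set.union_subset ?_ Set.inter_subset_right
    intro x hx
    exact (inf_le_right : A ⊓ B ≤ B) hx
  have hCA₁ : A ⊓ B ≤ Subgroup.closure ((↑(A ⊓ B) : Set G) ∪ (F ∩ ↑A)) :=
    fun x hx => Subgroup.subset_closure (Or.inl hx)
  have hCB₁ : A ⊓ B ≤ Subgroup.closure ((↑(A ⊓ B) : Set G) ∪ (F ∩ ↑B)) :=
    fun x hx => Subgroup.subset_closure (Or.inl hx)
  have htop1 : Subgroup.closure
      ((Subgroup.closure ((↑(A ⊓ B) : Set G) ∪ (F ∩ ↑A)) : Set G)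
        ∪ (Subgroup.closure ((↑(A ⊓ B) : Set G) ∪ (F ∩ ↑B)) : Set G)) = ⊤ := by
    rw [eq_top_iff, ← hSgen, Subgroup.closure_le]
    intro s hs
    have hst := ht hs
    rw [Set.mem_iUnion₂] at hst
    obtain ⟨g, hgt, hgs⟩ := hst
    have hgmem : g ∈ Subgroup.closure
        ((Subgroup.closure ((↑(A ⊓ B) : Set G) ∪ (F ∩ ↑A)) : Set G)
          ∪ (Subgroup.closure ((↑(A ⊓ B) : Set G) ∪ (F ∩ ↑B)) : Set G)) := by
      rw [← hdec2 g]
      refine list_prod_mem ?_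
      intro x hx
      have hxF : x ∈ F := Set.mem_biUnion hgt hx
      rcases hdec1 g x hx with hA' | hB'
      · exact Subgroup.subset_closure
          (Or.inl (Subgroup.subset_closure (Or.inr ⟨hxF, hA'⟩)))
      · exact Subgroup.subset_closure
          (Or.inr (Subgroup.subset_closure (Or.inr ⟨hxF, hB'⟩)))
    have hs2 : s = g * (g⁻¹ * s) := by group
    rw [SetLike.mem_coe, hs2]
    exact mul_mem hgmem (Subgroup.subset_closure (Or.inl (hCA₁ hgs)))
  obtain ⟨hAle, hBle⟩ := factors_eq A B _ _ hsplit hA₁A hB₁B hCA₁ hCB₁ htop1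
  constructor
  · exact cg_of_closure (A ⊓ B) A inf_le_left SC hSCcomp hSCgen (F ∩ ↑A)
      (hFfin.inter_of_left _) Set.inter_subset_right (le_antisymm hA₁A hAle)
  · exact cg_of_closure (A ⊓ B) B inf_le_right SC hSCcomp hSCgen (F ∩ ↑B)
      (hFfin.inter_of_left _) Set.inter_subset_right (le_antisymm hB₁B hBle)
end

section
/- Let G be a Hausdorff topological group, N a compact normal subgroup of G, and φ : G → G/N the quotient homomorphism. Let 𝒥 be a class of closed subgroups of G and let 𝒦 = { φ(Q) : Q ∈ 𝒥 }. Then G is 𝒥-coherent if and only if G/N is 𝒦-coherent. -/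
open MulAction

universe u v

set_option linter.unusedSectionVars false
set_option maxHeartbeats 1000000

open Pointwise

namespace CPAux

variable {Q : Type*} [Group Q]

/-- Evaluation homomorphism from the free group on a subset. -/
abbrev ev (S : Set Q) : FreeGroup S →* Q := FreeGroup.lift (fun s : S => (s : Q))

section Words


variable {Q : Type*} [Group Q]


lemma ev_of {S : Set Q} (s : S) : ev S (FreeGroup.of s) = (s : Q) := FreeGroup.lift_apply_of

lemma mk_true {S : Set Q} (s : S) : FreeGroup.mk [(s, true)] = FreeGroup.of s := rfl

lemma mk_false {S : Set Q} (s : S) : FreeGroup.mk [(s, false)] = (FreeGroup.of s)⁻¹ := by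
  rw [FreeGroup.of, FreeGroup.inv_mk]
  simp [FreeGroup.invRev]

lemma ev_mk_append {S : Set Q} (l₁ l₂ : List (S × Bool)) :
    ev S (FreeGroup.mk (l₁ ++ l₂)) = ev S (FreeGroup.mk l₁) * ev S (FreeGroup.mk l₂) := by
  rw [← FreeGroup.mul_mk, map_mul]

lemma exists_word {S : Set Q} {m : ℕ} {z : Q}
    (hz : z ∈ (S ∪ S⁻¹ ∪ {1}) ^ m) :
    ∃ l : List (S × Bool), l.length ≤ m ∧ ev S (FreeGroup.mk l) = z := by
  induction m generalizing z with
  | zero =>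
    rw [pow_zero] at hz
    refine ⟨[], by simp, ?_⟩
    rw [Set.mem_one] at hz
    subst hz
    rfl
  | succ m ih =>
    rw [pow_succ, Set.mem_mul] at hz
    obtain ⟨a, ha, b, hb, rfl⟩ := hz
    obtain ⟨l, hl, hev⟩ := ih ha
    rcases hb with hb | hb
    · rcases hb with hb | hb
      · refine ⟨l ++ [(⟨b, hb⟩, true)], by simp; omega, ?_⟩
        rw [ev_mk_append, hev, mk_true, ev_of]
      · rw [Set.mem_inv] at hb
        refine ⟨l ++ [(⟨b⁻¹, hb⟩, false)], by simp; omega, ?_⟩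
        rw [ev_mk_append, hev, mk_false, map_inv, ev_of]
        simp
    · rw [Set.mem_singleton_iff] at hb
      subst hb
      exact ⟨l, by simpa using Nat.le_succ_of_le hl, by simpa using hev⟩




variable [TopologicalSpace Q] [IsTopologicalGroup Q] [T2Space Q]

lemma ball_inv (S : Set Q) : (S ∪ S⁻¹ ∪ {1})⁻¹ = S ∪ S⁻¹ ∪ {1} := by
  ext x
  simp only [Set.mem_inv, Set.mem_union, Set.mem_singleton_iff, inv_eq_one]
  constructor
  · rintro ((h | h) | h)
    · exact Or.inl (Or.inr (by simpa using h))
    · exact Or.inl (Or.inl (by simpa using h))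
    · exact Or.inr h
  · rintro ((h | h) | h)
    · exact Or.inl (Or.inr (by simpa using h))
    · exact Or.inl (Or.inl (by simpa using h))
    · exact Or.inr (by simpa using h)

lemma one_mem_ball (S : Set Q) : (1 : Q) ∈ S ∪ S⁻¹ ∪ {1} := Or.inr rfl

lemma isCompact_ball {S : Set Q} (hS : IsCompact S) : IsCompact (S ∪ S⁻¹ ∪ {1}) :=
  (hS.union hS.inv).union isCompact_singleton

lemma isCompact_ball_pow {S : Set Q} (hS : IsCompact S) (m : ℕ) :
    IsCompact ((S ∪ S⁻¹ ∪ {1}) ^ m) := by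
  induction m with
  | zero =>
    rw [pow_zero, ← Set.singleton_one]
    exact isCompact_singleton
  | succ m ih => rw [pow_succ]; exact ih.mul (isCompact_ball hS)

lemma mem_ball_pow_of_mem_closure {S : Set Q} {q : Q} (hq : q ∈ Subgroup.closure S) :
    ∃ m : ℕ, q ∈ (S ∪ S⁻¹ ∪ {1}) ^ m := by
  induction hq using Subgroup.closure_induction with
  | mem x hx => exact ⟨1, by rw [pow_one]; exact Or.inl (Or.inl hx)⟩
  | one => exact ⟨0, by rw [pow_zero]; exact Set.mem_one.2 rfl⟩
  | mul x y hx hy ihx ihy =>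
    obtain ⟨m, hm⟩ := ihx
    obtain ⟨k, hk⟩ := ihy
    exact ⟨m + k, by rw [pow_add]; exact Set.mul_mem_mul hm hk⟩
  | inv x hx ihx =>
    obtain ⟨m, hm⟩ := ihx
    refine ⟨m, ?_⟩
    have : x⁻¹ ∈ ((S ∪ S⁻¹ ∪ {1}) ^ m)⁻¹ := Set.inv_mem_inv.2 hm
    rwa [← inv_pow, ball_inv S] at this

/-- Baire-category bound: a compact subgroup contained in a compactly generated
group is contained in a bounded-radius ball of words in the generators. -/
lemma exists_bound {S : Set Q} (hS : IsCompact S) (hgen : Subgroup.closure S = ⊤)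
    (C : Subgroup Q) (hC : IsCompact (C : Set Q)) :
    ∃ M : ℕ, (C : Set Q) ⊆ (S ∪ S⁻¹ ∪ {1}) ^ M := by

  have hcov : ∀ q : Q, ∃ m : ℕ, q ∈ (S ∪ S⁻¹ ∪ {1}) ^ m := fun q =>
    mem_ball_pow_of_mem_closure (by rw [hgen]; trivial)
  -- Baire category on the compact Hausdorff space ↥C
  haveI : CompactSpace (C : Set Q) := isCompact_iff_compactSpace.mp hC
  haveI : Nonempty (C : Set Q) := ⟨⟨1, C.one_mem⟩⟩
  have hclosed : ∀ m : ℕ, IsClosed ((Subtype.val : ↥(C : Set Q) → Q) ⁻¹' ((S ∪ S⁻¹ ∪ {1}) ^ m)) :=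
    fun m => ((isCompact_ball_pow hS m).isClosed).preimage
      (continuous_subtype_val : Continuous ((↑) : ↥(C : Set Q) → Q))
  have hcover : (⋃ m : ℕ, (Subtype.val : ↥(C : Set Q) → Q) ⁻¹' ((S ∪ S⁻¹ ∪ {1}) ^ m)) = Set.univ := by
    ext x
    simp only [Set.mem_iUnion, Set.mem_preimage, Set.mem_univ, iff_true]
    exact hcov x
  obtain ⟨m, x, hx⟩ := nonempty_interior_of_iUnion_of_closed hclosed hcover
  -- extract an open set in Q
  rw [mem_interior] at hx
  obtain ⟨U, hU, hUopen, hxU⟩ := hx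
  obtain ⟨V, hVopen, hUV⟩ := isOpen_induced_iff.mp hUopen
  have hxV : (x : Q) ∈ V := by
    have h := hxU; rw [← hUV] at h; exact h
  have hVball : ∀ y : Q, y ∈ C → y ∈ V → y ∈ (S ∪ S⁻¹ ∪ {1}) ^ m := by
    intro y hy hyV
    have h : (⟨y, hy⟩ : ↥(C : Set Q)) ∈ U := by rw [← hUV]; exact hyV
    exact hU h
  have hcover2 : (C : Set Q) ⊆ ⋃ c : ↥(C : Set Q), (fun y => (c : Q) * (x : Q)⁻¹ * y) '' V := by
    intro z hz
    exact Set.mem_iUnion.2 ⟨⟨z, hz⟩, ⟨(x : Q), hxV, by group⟩⟩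
  obtain ⟨t, ht⟩ := hC.elim_finite_subcover
    (fun c : ↥(C : Set Q) => (fun y => (c : Q) * (x : Q)⁻¹ * y) '' V)
    (fun c => (Homeomorph.mulLeft ((c : Q) * (x : Q)⁻¹)).isOpenMap V hVopen) hcover2
  classical
  set mf : ↥(C : Set Q) → ℕ := fun c => (hcov (c : Q)).choose with hmf
  obtain ⟨mx, hmx⟩ := hcov ((x : Q)⁻¹)
  refine ⟨t.sup mf + mx + m, ?_⟩
  intro z hz
  obtain ⟨c, hct, hzmem⟩ := Set.mem_iUnion₂.mp (ht hz)
  obtain ⟨v, hvV, hzeq⟩ := hzmem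
  have hvC : v ∈ C := by
    have hveq : v = (x : Q) * (c : Q)⁻¹ * z := by rw [← hzeq]; group
    rw [hveq]
    exact C.mul_mem (C.mul_mem x.2 (C.inv_mem c.2)) hz
  have hvball := hVball v hvC hvV
  have hzin : z ∈ (S ∪ S⁻¹ ∪ {1}) ^ (mf c) * (S ∪ S⁻¹ ∪ {1}) ^ mx *
      (S ∪ S⁻¹ ∪ {1}) ^ m := by
    rw [← hzeq]
    exact Set.mul_mem_mul (Set.mul_mem_mul (hcov (c : Q)).choose_spec hmx) hvball
  rw [← pow_add, ← pow_add] at hzin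
  refine Set.pow_subset_pow_right (one_mem_ball S) ?_ hzin
  have := Finset.le_sup (f := mf) hct
  omega


end Words

section Transfer

variable {K : Type*} [Group K] [TopologicalSpace K] [TopologicalSpace Q]
variable (f : Q →* K)

lemma closure_preimage_top (hsurj : Function.Surjective f) {T : Set K}
    (hgen : Subgroup.closure T = ⊤) :
    Subgroup.closure (f ⁻¹' (T ∪ {1})) = ⊤ := by
  rw [eq_top_iff]
  intro q _
  have h1 : ∀ k ∈ Subgroup.closure T,
      ∃ p ∈ Subgroup.closure (f ⁻¹' (T ∪ {1})), f p = k := by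
    intro k hk
    induction hk using Subgroup.closure_induction with
    | mem x hx =>
      obtain ⟨p, hp⟩ := hsurj x
      exact ⟨p, Subgroup.subset_closure (by simp [hp, hx]), hp⟩
    | one => exact ⟨1, one_mem _, map_one f⟩
    | mul x y _ _ ihx ihy =>
      obtain ⟨p, hp, hfp⟩ := ihx
      obtain ⟨r, hr, hfr⟩ := ihy
      exact ⟨p * r, mul_mem hp hr, by rw [map_mul, hfp, hfr]⟩
    | inv x _ ihx =>
      obtain ⟨p, hp, hfp⟩ := ihx
      exact ⟨p⁻¹, inv_mem hp, by rw [map_inv, hfp]⟩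
  obtain ⟨p, hp, hfp⟩ := h1 (f q) (by rw [hgen]; trivial)
  have hmem : p⁻¹ * q ∈ f ⁻¹' (T ∪ {1}) := by
    simp [Set.mem_preimage, map_mul, map_inv, hfp]
  have hq : q = p * (p⁻¹ * q) := by group
  rw [hq]
  exact mul_mem hp (Subgroup.subset_closure hmem)

lemma cg_image (hf : Continuous f) (hsurj : Function.Surjective f) :
    IsCompactlyGeneratedGroup Q → IsCompactlyGeneratedGroup K := by
  rintro ⟨S, hS, hgen⟩
  refine ⟨f '' S, hS.image hf, ?_⟩
  rw [← MonoidHom.map_closure, hgen, Subgroup.map_top_of_surjective f hsurj]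

lemma cg_lift (hsurj : Function.Surjective f)
    (hprop : ∀ T : Set K, IsCompact T → IsCompact (f ⁻¹' T)) :
    IsCompactlyGeneratedGroup K → IsCompactlyGeneratedGroup Q := by
  rintro ⟨T, hT, hgen⟩
  exact ⟨f ⁻¹' (T ∪ {1}), hprop _ (hT.union isCompact_singleton),
    closure_preimage_top f hsurj hgen⟩


lemma cp_image [IsTopologicalGroup Q] [T2Space Q]
    (hf : Continuous f) (hsurj : Function.Surjective f)
    (hker : IsCompact ((f.ker : Subgroup Q) : Set Q)) :
    IsCompactlyPresentedGroup Q → IsCompactlyPresentedGroup K := by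
  rintro ⟨S, n, hS, hgen, hpres⟩
  obtain ⟨M, hM⟩ := exists_bound hS hgen f.ker hker
  -- the letter map and its section
  have hmemT : ∀ s : S, f s ∈ f '' S := fun s => ⟨s, s.2, rfl⟩
  set φ : S → (f '' S : Set K) := fun s => ⟨f s, hmemT s⟩ with hφ
  set gh : FreeGroup S →* FreeGroup (f '' S : Set K) := FreeGroup.map φ with hgh
  have hτex : ∀ t : (f '' S : Set K), ∃ s : S, φ s = t := by
    rintro ⟨t, s, hsS, rfl⟩
    exact ⟨⟨s, hsS⟩, rfl⟩
  set τ : (f '' S : Set K) → S := fun t => (hτex t).choose with hτdef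
  have hτ : ∀ t, φ (τ t) = t := fun t => (hτex t).choose_spec
  set th : FreeGroup (f '' S : Set K) →* FreeGroup S := FreeGroup.map τ with hth
  have hEg : (ev (f '' S)).comp gh = f.comp (ev S) := by
    apply FreeGroup.ext_hom
    intro s
    simp [hgh, hφ, FreeGroup.map.of, ev]
  have hgτ : gh.comp th = MonoidHom.id _ := by
    apply FreeGroup.ext_hom
    intro t
    simp only [MonoidHom.comp_apply, hth, hgh, FreeGroup.map.of, MonoidHom.id_apply]
    rw [hτ]
  refine ⟨f '' S, max n M, hS.image hf, ?_, ?_⟩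
  · rw [← MonoidHom.map_closure, hgen, Subgroup.map_top_of_surjective f hsurj]
  set RT := {x : FreeGroup (f '' S : Set K) |
      x ∈ (FreeGroup.lift (fun s : (f '' S : Set K) => (s : K))).ker ∧
        ∃ l : List ((f '' S : Set K) × Bool), FreeGroup.mk l = x ∧ l.length ≤ max n M}
    with hRT
  set RS := {x : FreeGroup S |
      x ∈ (FreeGroup.lift (fun s : S => (s : Q))).ker ∧
        ∃ l : List (S × Bool), FreeGroup.mk l = x ∧ l.length ≤ n} with hRS
  have himg : ⇑gh '' RS ⊆ RT := by
    rintro _ ⟨x, ⟨hxker, l, hlmk, hllen⟩, rfl⟩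
    constructor
    · rw [MonoidHom.mem_ker] at hxker ⊢
      have : (ev (f '' S)) (gh x) = f ((ev S) x) := by
        rw [← MonoidHom.comp_apply, hEg, MonoidHom.comp_apply]
      rw [this, hxker, map_one]
    · refine ⟨l.map fun p => (φ p.1, p.2), ?_, by simpa using hllen.trans (le_max_left n M)⟩
      rw [← hlmk, hgh, FreeGroup.map.mk]
  refine le_antisymm
    (Subgroup.normalClosure_le_normal fun x hx => hx.1) ?_
  intro v hv
  rw [MonoidHom.mem_ker] at hv
  -- lift v and correct by a kernel word
  set u : FreeGroup S := th v with hu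
  have hghu : gh u = v := by
    rw [hu, ← MonoidHom.comp_apply, hgτ, MonoidHom.id_apply]
  have hfu : (ev S) u ∈ f.ker := by
    rw [MonoidHom.mem_ker, ← MonoidHom.comp_apply, ← hEg, MonoidHom.comp_apply, hghu]
    exact hv
  obtain ⟨l, hllen, hlev⟩ := exists_word (hM hfu)
  have hrel : u * (FreeGroup.mk l)⁻¹ ∈ Subgroup.normalClosure RS := by
    rw [hpres, MonoidHom.mem_ker, map_mul, map_inv]
    change (ev S) u * ((ev S) (FreeGroup.mk l))⁻¹ = 1
    rw [hlev, mul_inv_cancel]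
  have hmap : gh (u * (FreeGroup.mk l)⁻¹) ∈ Subgroup.normalClosure (⇑gh '' RS) := by
    have hle : Subgroup.normalClosure RS ≤
        (Subgroup.normalClosure (⇑gh '' RS)).comap gh := by
      haveI : ((Subgroup.normalClosure (⇑gh '' RS)).comap gh).Normal :=
        Subgroup.Normal.comap inferInstance gh
      exact Subgroup.normalClosure_le_normal fun x hx =>
        Subgroup.subset_normalClosure ⟨x, hx, rfl⟩
    exact hle hrel
  have hw0 : gh (FreeGroup.mk l) ∈ RT := by
    constructor
    · rw [MonoidHom.mem_ker]
      have : (ev (f '' S)) (gh (FreeGroup.mk l)) = f ((ev S) (FreeGroup.mk l)) := by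
        rw [← MonoidHom.comp_apply, hEg, MonoidHom.comp_apply]
      rw [this, hlev]
      exact hfu
    · refine ⟨l.map fun p => (φ p.1, p.2), ?_, by simpa using hllen.trans (le_max_right n M)⟩
      rw [hgh, FreeGroup.map.mk]
  have hveq : v = gh (u * (FreeGroup.mk l)⁻¹) * gh (FreeGroup.mk l) := by
    have huu : u * (FreeGroup.mk l)⁻¹ * FreeGroup.mk l = u := by group
    rw [← map_mul, huu, hghu]
  rw [hveq]
  exact mul_mem (Subgroup.normalClosure_mono himg hmap) (Subgroup.subset_normalClosure hw0)



lemma cp_lift (hf : Continuous f) (hsurj : Function.Surjective f)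
    (hprop : ∀ T : Set K, IsCompact T → IsCompact (f ⁻¹' T)) :
    IsCompactlyPresentedGroup K → IsCompactlyPresentedGroup Q := by
  rintro ⟨T, n, hT, hgen, hpres⟩
  classical
  refine ⟨f ⁻¹' (T ∪ {1}), n + 4, hprop _ (hT.union isCompact_singleton),
    closure_preimage_top f hsurj hgen, ?_⟩
  set S : Set Q := f ⁻¹' (T ∪ {1}) with hSdef
  set RQ := {x : FreeGroup S | x ∈ (FreeGroup.lift (fun s : S => (s : Q))).ker ∧
      ∃ l : List (S × Bool), FreeGroup.mk l = x ∧ l.length ≤ n + 4} with hRQ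
  refine le_antisymm (Subgroup.normalClosure_le_normal fun x hx => hx.1) ?_
  set π : FreeGroup S →* FreeGroup S ⧸ Subgroup.normalClosure RQ :=
    QuotientGroup.mk' (Subgroup.normalClosure RQ) with hπ
  -- short relations
  have short_rel : ∀ (lx ly : List (S × Bool)), lx.length + ly.length ≤ n + 4 →
      ev S (FreeGroup.mk lx) = ev S (FreeGroup.mk ly) →
      π (FreeGroup.mk lx) = π (FreeGroup.mk ly) := by
    intro lx ly hlen he
    have hmem : (FreeGroup.mk lx)⁻¹ * FreeGroup.mk ly ∈ Subgroup.normalClosure RQ := by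
      refine Subgroup.subset_normalClosure ⟨?_, ⟨FreeGroup.invRev lx ++ ly, ?_, ?_⟩⟩
      · rw [MonoidHom.mem_ker, map_mul, map_inv]
        change ((ev S) (FreeGroup.mk lx))⁻¹ * (ev S) (FreeGroup.mk ly) = 1
        rw [he, inv_mul_cancel]
      · rw [← FreeGroup.mul_mk, FreeGroup.inv_mk]
      · rw [List.length_append, FreeGroup.invRev_length]; omega
    exact (QuotientGroup.eq (s := Subgroup.normalClosure RQ)).2 hmem
  have memS : ∀ z : Q, f z = 1 → z ∈ S := by
    intro z hz
    simp [hSdef, Set.mem_preimage, hz]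
  -- kernel letters
  set ζ : ∀ z : Q, f z = 1 → FreeGroup S :=
    fun z hz => FreeGroup.of (⟨z, memS z hz⟩ : S) with hζ
  have ev_ζ : ∀ (z : Q) (hz : f z = 1), ev S (ζ z hz) = z := fun z hz => FreeGroup.lift_apply_of
  have r_mul : ∀ (z₁ z₂ : Q) (hz₁ : f z₁ = 1) (hz₂ : f z₂ = 1),
      π (ζ z₁ hz₁) * π (ζ z₂ hz₂) =
        π (ζ (z₁ * z₂) (by rw [map_mul, hz₁, hz₂, mul_one])) := by
    intro z₁ z₂ hz₁ hz₂
    rw [← map_mul]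
    simp only [hζ]
    rw [← mk_true (⟨z₁, memS z₁ hz₁⟩ : S), ← mk_true (⟨z₂, memS z₂ hz₂⟩ : S),
      FreeGroup.mul_mk, ← mk_true (⟨z₁ * z₂, _⟩ : S)]
    apply short_rel
    · simp
    · rw [ev_mk_append, mk_true, mk_true, mk_true, ev_of, ev_of, ev_of]
  have r_one : ∀ hz : f (1 : Q) = 1, π (ζ 1 hz) = 1 := by
    intro hz
    have h0 : π (FreeGroup.mk ([] : List (S × Bool))) = 1 := by
      rw [← FreeGroup.one_eq_mk, map_one]
    simp only [hζ]
    rw [← mk_true (⟨(1 : Q), memS 1 hz⟩ : S), ← h0]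
    apply short_rel
    · simp
    · rw [mk_true, ev_of, ← FreeGroup.one_eq_mk, map_one]
  have hζcong : ∀ (z w : Q) (hz : f z = 1) (hw : f w = 1), z = w →
      π (ζ z hz) = π (ζ w hw) := by
    intro z w hz hw h
    subst h
    rfl
  have r_inv : ∀ (z : Q) (hz : f z = 1),
      (π (ζ z hz))⁻¹ = π (ζ z⁻¹ (by rw [map_inv, hz, inv_one])) := by
    intro z hz
    have h1 := r_mul z z⁻¹ hz (by rw [map_inv, hz, inv_one])
    rw [hζcong (z * z⁻¹) 1 (by rw [map_mul, map_inv, hz]; simp) (map_one f)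
      (mul_inv_cancel z), r_one (map_one f)] at h1
    exact inv_eq_of_mul_eq_one_right h1
  have r_conj₁ : ∀ (s : S) (z : Q) (hz : f z = 1),
      π (FreeGroup.of s) * π (ζ z hz) * (π (FreeGroup.of s))⁻¹ =
        π (ζ ((s : Q) * z * (s : Q)⁻¹)
          (by rw [map_mul, map_mul, map_inv, hz, mul_one, mul_inv_cancel])) := by
    intro s z hz
    rw [← map_inv, ← map_mul, ← map_mul]
    simp only [hζ]
    rw [← mk_false s, ← mk_true s, ← mk_true (⟨z, memS z hz⟩ : S),
      FreeGroup.mul_mk, FreeGroup.mul_mk,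
      ← mk_true (⟨(s : Q) * z * (s : Q)⁻¹, _⟩ : S)]
    apply short_rel
    · simp
    · rw [ev_mk_append, ev_mk_append]
      simp [mk_true, mk_false, ev_of]
  have r_conj₂ : ∀ (s : S) (z : Q) (hz : f z = 1),
      (π (FreeGroup.of s))⁻¹ * π (ζ z hz) * π (FreeGroup.of s) =
        π (ζ ((s : Q)⁻¹ * z * (s : Q))
          (by rw [map_mul, map_mul, map_inv, hz, mul_one, inv_mul_cancel])) := by
    intro s z hz
    rw [← map_inv, ← map_mul, ← map_mul]
    simp only [hζ]
    rw [← mk_false s, ← mk_true s, ← mk_true (⟨z, memS z hz⟩ : S),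
      FreeGroup.mul_mk, FreeGroup.mul_mk,
      ← mk_true (⟨(s : Q)⁻¹ * z * (s : Q), _⟩ : S)]
    apply short_rel
    · simp
    · rw [ev_mk_append, ev_mk_append]
      simp [mk_true, mk_false, ev_of]
  set Zset : Set (FreeGroup S ⧸ Subgroup.normalClosure RQ) :=
    {h | ∃ (z : Q) (hz : f z = 1), h = π (ζ z hz)} with hZset
  have hπsurj : Function.Surjective π := QuotientGroup.mk'_surjective _
  have htop : ∀ g : FreeGroup S ⧸ Subgroup.normalClosure RQ,
      g ∈ Subgroup.closure (Set.range fun s : S => π (FreeGroup.of s)) := by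
    intro g
    have h2 : (Set.range fun s : S => π (FreeGroup.of s)) =
        ⇑π '' Set.range (FreeGroup.of : S → FreeGroup S) := by
      rw [← Set.range_comp]; rfl
    have h1 : Subgroup.closure (Set.range fun s : S => π (FreeGroup.of s)) = ⊤ := by
      rw [h2, ← MonoidHom.map_closure, FreeGroup.closure_range_of,
        Subgroup.map_top_of_surjective _ hπsurj]
    rw [h1]; trivial
  have hconjZ : ∀ g, ∀ h ∈ Subgroup.closure Zset,
      g * h * g⁻¹ ∈ Subgroup.closure Zset ∧ g⁻¹ * h * g ∈ Subgroup.closure Zset := by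
    intro g
    induction htop g using Subgroup.closure_induction with
    | mem x hx =>
      obtain ⟨s, rfl⟩ := hx
      intro h hh
      induction hh using Subgroup.closure_induction with
      | mem y hy =>
        obtain ⟨z, hz, rfl⟩ := hy
        constructor
        · rw [r_conj₁ s z hz]
          exact Subgroup.subset_closure ⟨(s : Q) * z * (s : Q)⁻¹,
            by rw [map_mul, map_mul, map_inv, hz, mul_one, mul_inv_cancel], rfl⟩
        · rw [r_conj₂ s z hz]
          exact Subgroup.subset_closure ⟨(s : Q)⁻¹ * z * (s : Q),
            by rw [map_mul, map_mul, map_inv, hz, mul_one, inv_mul_cancel], rfl⟩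
      | one => constructor <;> · simpa using one_mem _
      | mul y₁ y₂ hy₁ hy₂ ih₁ ih₂ =>
        constructor
        · have he : π (FreeGroup.of s) * (y₁ * y₂) * (π (FreeGroup.of s))⁻¹ =
            (π (FreeGroup.of s) * y₁ * (π (FreeGroup.of s))⁻¹) *
            (π (FreeGroup.of s) * y₂ * (π (FreeGroup.of s))⁻¹) := by group
          rw [he]; exact mul_mem ih₁.1 ih₂.1
        · have he : (π (FreeGroup.of s))⁻¹ * (y₁ * y₂) * π (FreeGroup.of s) =
            ((π (FreeGroup.of s))⁻¹ * y₁ * π (FreeGroup.of s)) *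
            ((π (FreeGroup.of s))⁻¹ * y₂ * π (FreeGroup.of s)) := by group
          rw [he]; exact mul_mem ih₁.2 ih₂.2
      | inv y hy ih =>
        constructor
        · have he : π (FreeGroup.of s) * y⁻¹ * (π (FreeGroup.of s))⁻¹ =
            (π (FreeGroup.of s) * y * (π (FreeGroup.of s))⁻¹)⁻¹ := by group
          rw [he]; exact inv_mem ih.1
        · have he : (π (FreeGroup.of s))⁻¹ * y⁻¹ * π (FreeGroup.of s) =
            ((π (FreeGroup.of s))⁻¹ * y * π (FreeGroup.of s))⁻¹ := by group
          rw [he]; exact inv_mem ih.2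
    | one => intro h hh; constructor <;> · simpa using hh
    | mul g₁ g₂ hg₁ hg₂ ih₁ ih₂ =>
      intro h hh
      constructor
      · have he : g₁ * g₂ * h * (g₁ * g₂)⁻¹ = g₁ * (g₂ * h * g₂⁻¹) * g₁⁻¹ := by group
        rw [he]; exact (ih₁ _ ((ih₂ h hh).1)).1
      · have he : (g₁ * g₂)⁻¹ * h * (g₁ * g₂) = g₂⁻¹ * (g₁⁻¹ * h * g₁) * g₂ := by group
        rw [he]; exact (ih₂ _ ((ih₁ h hh).2)).2
    | inv g hg ih =>
      intro h hh
      constructor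
      · have he : g⁻¹ * h * (g⁻¹)⁻¹ = g⁻¹ * h * g := by group
        rw [he]; exact (ih h hh).2
      · have he : (g⁻¹)⁻¹ * h * g⁻¹ = g * h * g⁻¹ := by group
        rw [he]; exact (ih h hh).1
  have hZnormal : (Subgroup.closure Zset).Normal := ⟨fun h hh g => (hconjZ g h hh).1⟩
  haveI := hZnormal
  set ρ : (FreeGroup S ⧸ Subgroup.normalClosure RQ) →*
      (FreeGroup S ⧸ Subgroup.normalClosure RQ) ⧸ Subgroup.closure Zset :=
    QuotientGroup.mk' (Subgroup.closure Zset) with hρ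
  -- the comparison homomorphisms
  set gfun : S → FreeGroup ↥T := fun s =>
    if h : f (s : Q) ∈ T then FreeGroup.of (⟨f (s : Q), h⟩ : T) else 1 with hgfun
  set gh : FreeGroup S →* FreeGroup ↥T := FreeGroup.lift gfun with hgh
  have hfS : ∀ s : S, f (s : Q) ∉ T → f (s : Q) = 1 := by
    intro s h
    have h2 : (s : Q) ∈ f ⁻¹' (T ∪ {1}) := s.2
    rw [Set.mem_preimage] at h2
    rcases h2 with h2 | h2
    · exact absurd h2 h
    · exact h2
  have hτex : ∀ t : ↥T, ∃ q : Q, f q = (t : K) := fun t => hsurj t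
  have hτmem : ∀ t : ↥T, (hτex t).choose ∈ S := by
    intro t
    show (hτex t).choose ∈ f ⁻¹' (T ∪ {1})
    rw [Set.mem_preimage, (hτex t).choose_spec]
    exact Or.inl t.2
  set τ : ↥T → S := fun t => ⟨(hτex t).choose, hτmem t⟩ with hτdef
  have hτ : ∀ t, f ((τ t : S) : Q) = (t : K) := fun t => (hτex t).choose_spec
  set th : FreeGroup ↥T →* FreeGroup S := FreeGroup.map τ with hth
  have hEg : (ev T).comp gh = f.comp (ev S) := by
    apply FreeGroup.ext_hom
    intro s
    rw [MonoidHom.comp_apply, MonoidHom.comp_apply, hgh, FreeGroup.lift_apply_of]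
    by_cases h : f (s : Q) ∈ T
    · simp only [hgfun]
      rw [dif_pos h]
      rw [ev_of, ev_of]
    · simp only [hgfun]
      rw [dif_neg h, map_one, ev_of, hfS s h]
  have hgτ : gh.comp th = MonoidHom.id (FreeGroup ↥T) := by
    apply FreeGroup.ext_hom
    intro t
    rw [MonoidHom.comp_apply, MonoidHom.id_apply, hth, FreeGroup.map.of, hgh,
      FreeGroup.lift_apply_of]
    have hc : f ((τ t : S) : Q) ∈ T := by rw [hτ t]; exact t.2
    simp only [hgfun]
    rw [dif_pos hc]
    congr 1
    exact Subtype.ext (hτ t)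
  -- the two maps agree modulo Zset
  have hAB : (ρ.comp π).comp (th.comp gh) = ρ.comp π := by
    apply FreeGroup.ext_hom
    intro s
    rw [MonoidHom.comp_apply, MonoidHom.comp_apply, MonoidHom.comp_apply,
      MonoidHom.comp_apply, hgh, FreeGroup.lift_apply_of]
    by_cases h : f (s : Q) ∈ T
    · simp only [hgfun]
      rw [dif_pos h, hth, FreeGroup.map.of]
      set s' : S := τ (⟨f (s : Q), h⟩ : ↥T) with hs'
      have hfs' : f ((s' : S) : Q) = f (s : Q) := hτ _
      have hc : f (((s' : S) : Q)⁻¹ * (s : Q)) = 1 := by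
        rw [map_mul, map_inv, hfs', inv_mul_cancel]
      have key : (π (FreeGroup.of s'))⁻¹ * π (FreeGroup.of s) =
          π (ζ (((s' : S) : Q)⁻¹ * (s : Q)) hc) := by
        rw [← map_inv, ← map_mul]
        simp only [hζ]
        rw [← mk_false s', ← mk_true s, FreeGroup.mul_mk,
          ← mk_true (⟨((s' : S) : Q)⁻¹ * (s : Q), _⟩ : S)]
        apply short_rel
        · simp
        · rw [ev_mk_append]
          simp [mk_true, mk_false, ev_of]
      have hsplit : π (FreeGroup.of s) =
          π (FreeGroup.of s') * π (ζ (((s' : S) : Q)⁻¹ * (s : Q)) hc) := by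
        rw [← key]; group
      rw [hsplit, map_mul]
      have hone : ρ (π (ζ (((s' : S) : Q)⁻¹ * (s : Q)) hc)) = 1 :=
        (QuotientGroup.eq_one_iff _).2
          (Subgroup.subset_closure ⟨_, hc, rfl⟩)
      rw [hone, mul_one]
    · simp only [hgfun]
      rw [dif_neg h, map_one, map_one, map_one]
      have h1 : f (s : Q) = 1 := hfS s h
      have hmem : π (FreeGroup.of s) ∈ Subgroup.closure Zset := by
        exact Subgroup.subset_closure ⟨(s : Q), h1, rfl⟩
      exact ((QuotientGroup.eq_one_iff _).2 hmem).symm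
  -- short relators of K map into Zset
  have hth_short : ∀ r, r ∈ (FreeGroup.lift (fun t : ↥T => (t : K))).ker →
      (∃ l : List (↥T × Bool), FreeGroup.mk l = r ∧ l.length ≤ n) →
      π (th r) ∈ Subgroup.closure Zset := by
    rintro r hker ⟨l, hmk, hlen⟩
    have hz : f ((ev S) (th r)) = 1 := by
      have h1 : (ev T) (gh (th r)) = f ((ev S) (th r)) := by
        rw [← MonoidHom.comp_apply, hEg, MonoidHom.comp_apply]
      have h3 : gh (th r) = r := DFunLike.congr_fun hgτ r
      rw [← h1, h3]
      exact MonoidHom.mem_ker.1 hker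
    have heq : π (th r) = π (ζ ((ev S) (th r)) hz) := by
      conv_lhs => rw [← hmk, hth, FreeGroup.map.mk]
      simp only [hζ]
      rw [← mk_true (⟨(ev S) (th r), memS _ hz⟩ : S)]
      apply short_rel
      · simp only [List.length_map, List.length_cons, List.length_nil]
        omega
      · rw [mk_true, ev_of, ← FreeGroup.map.mk, ← hth, hmk]
    rw [heq]
    exact Subgroup.subset_closure ⟨_, hz, rfl⟩
  -- all relators of K map into Zset
  have hthZ : ∀ x, x ∈ (FreeGroup.lift (fun t : ↥T => (t : K))).ker →
      π (th x) ∈ Subgroup.closure Zset := by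
    intro x hx
    rw [← hpres] at hx
    have hx' : x ∈ Subgroup.closure (Group.conjugatesOfSet
        {x : FreeGroup ↥T |
          x ∈ (FreeGroup.lift (fun t : ↥T => (t : K))).ker ∧
            ∃ l : List (↥T × Bool), FreeGroup.mk l = x ∧ l.length ≤ n}) := hx
    clear hx
    induction hx' using Subgroup.closure_induction with
    | mem y hy =>
      obtain ⟨r, hrRT, hconj⟩ := Group.mem_conjugatesOfSet_iff.mp hy
      obtain ⟨c, hc⟩ := isConj_iff.1 hconj
      rw [← hc, map_mul, map_mul, map_inv, map_mul, map_mul, map_inv]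
      exact (hconjZ (π (th c)) _ (hth_short r hrRT.1 hrRT.2)).1
    | one => rw [map_one, map_one]; exact one_mem _
    | mul y₁ y₂ hy₁ hy₂ ih₁ ih₂ => rw [map_mul, map_mul]; exact mul_mem ih₁ ih₂
    | inv y hy ih => rw [map_inv, map_inv]; exact inv_mem ih
  -- structure of the closure of Zset
  have hZstruct : ∀ h ∈ Subgroup.closure Zset,
      ∃ (z : Q) (hz : f z = 1), h = π (ζ z hz) := by
    intro h hh
    induction hh using Subgroup.closure_induction with
    | mem y hy => exact hy
    | one => exact ⟨1, map_one f, (r_one (map_one f)).symm⟩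
    | mul y₁ y₂ hy₁ hy₂ ih₁ ih₂ =>
      obtain ⟨z₁, hz₁, rfl⟩ := ih₁
      obtain ⟨z₂, hz₂, rfl⟩ := ih₂
      refine ⟨z₁ * z₂, by rw [map_mul, hz₁, hz₂, mul_one], ?_⟩
      rw [r_mul z₁ z₂ hz₁ hz₂]
    | inv y hy ih =>
      obtain ⟨z, hz, rfl⟩ := ih
      refine ⟨z⁻¹, by rw [map_inv, hz, inv_one], ?_⟩
      rw [r_inv z hz]
  -- conclusion
  intro w hw
  have hwev : (ev S) w = 1 := MonoidHom.mem_ker.1 hw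
  have hghw : gh w ∈ (FreeGroup.lift (fun t : ↥T => (t : K))).ker := by
    rw [MonoidHom.mem_ker]
    have h1 : (ev T) (gh w) = f ((ev S) w) := by
      rw [← MonoidHom.comp_apply, hEg, MonoidHom.comp_apply]
    rw [h1, hwev, map_one]
  have h1 : π (th (gh w)) ∈ Subgroup.closure Zset := hthZ _ hghw
  have h2 : ρ (π w) = ρ (π (th (gh w))) := (DFunLike.congr_fun hAB w).symm
  have h4 : π w * (π (th (gh w)))⁻¹ ∈ Subgroup.closure Zset := by
    have h3 : ρ (π w * (π (th (gh w)))⁻¹) = 1 := by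
      rw [map_mul, map_inv, h2, mul_inv_cancel]
    exact (QuotientGroup.eq_one_iff _).1 h3
  have h5 : π w ∈ Subgroup.closure Zset := by
    have h6 := mul_mem h4 h1
    rwa [inv_mul_cancel_right] at h6
  obtain ⟨z, hz, hzeq⟩ := hZstruct _ h5
  have h6 : w⁻¹ * ζ z hz ∈ Subgroup.normalClosure RQ :=
    (QuotientGroup.eq (s := Subgroup.normalClosure RQ)).1 hzeq
  have h7 : (ev S) (w⁻¹ * ζ z hz) = 1 := by
    have hle : Subgroup.normalClosure RQ ≤
        (FreeGroup.lift (fun s : S => (s : Q))).ker :=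
      Subgroup.normalClosure_le_normal fun x hx => hx.1
    exact MonoidHom.mem_ker.1 (hle h6)
  have hz1 : z = 1 := by
    rw [map_mul, map_inv, hwev, ev_ζ z hz] at h7
    simpa using h7
  subst hz1
  rw [r_one hz] at hzeq
  exact (QuotientGroup.eq_one_iff w).1 hzeq



end Transfer

section Main

open QuotientGroup

variable {G : Type*} [Group G] [TopologicalSpace G] [IsTopologicalGroup G] [T2Space G]

lemma quot_proper (N : Subgroup G) [N.Normal] (hN : IsCompact (N : Set G)) :
    IsProperMap ((↑) : G → G ⧸ N) := by
  rw [isProperMap_iff_isClosedMap_and_compact_fibers]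
  refine ⟨continuous_quot_mk, QuotientGroup.isClosedMap_coe hN, ?_⟩
  intro y
  obtain ⟨g, rfl⟩ := QuotientGroup.mk_surjective y
  have h1 : ((↑) : G → G ⧸ N) ⁻¹' {(g : G ⧸ N)} = {g} * (N : Set G) := by
    rw [← Set.image_singleton, QuotientGroup.preimage_image_mk_eq_mul]
  rw [h1]
  exact isCompact_singleton.mul hN

lemma subgroupMap_continuous (N : Subgroup G) [N.Normal] (Q : Subgroup G) :
    Continuous ⇑((QuotientGroup.mk' N).subgroupMap Q) := by
  refine Continuous.subtype_mk ?_ _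
  exact continuous_quot_mk.comp continuous_subtype_val

lemma hprop_subgroup (N : Subgroup G) [N.Normal] (hN : IsCompact (N : Set G))
    (Q : Subgroup G) (hQ : IsClosed (Q : Set G)) :
    ∀ T : Set (Q.map (QuotientGroup.mk' N)), IsCompact T →
      IsCompact (⇑((QuotientGroup.mk' N).subgroupMap Q) ⁻¹' T) := by
  intro T hT
  have hTK : IsCompact (Subtype.val '' T : Set (G ⧸ N)) :=
    hT.image continuous_subtype_val
  have hP := (quot_proper N hN).isCompact_preimage hTK
  have hset : ⇑((QuotientGroup.mk' N).subgroupMap Q) ⁻¹' T =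
      (Subtype.val : ↥Q → G) ⁻¹' (((↑) : G → G ⧸ N) ⁻¹' (Subtype.val '' T)) := by
    ext q
    simp only [Set.mem_preimage]
    constructor
    · intro h
      exact ⟨_, h, rfl⟩
    · rintro ⟨t, ht, hteq⟩
      have ht2 : t = (QuotientGroup.mk' N).subgroupMap Q q := Subtype.ext hteq
      rwa [← ht2]
  rw [hset, Subtype.isCompact_iff, Set.image_preimage_eq_inter_range,
    Subtype.range_coe]
  exact hP.inter_right hQ

lemma transfer_cg (N : Subgroup G) [N.Normal] (hN : IsCompact (N : Set G))
    (Q : Subgroup G) (hQ : IsClosed (Q : Set G)) :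
    (IsCompactlyGeneratedGroup Q ↔
      IsCompactlyGeneratedGroup (Q.map (QuotientGroup.mk' N))) := by
  constructor
  · exact cg_image _ (subgroupMap_continuous N Q)
      ((QuotientGroup.mk' N).subgroupMap_surjective Q)
  · exact cg_lift _ ((QuotientGroup.mk' N).subgroupMap_surjective Q)
      (hprop_subgroup N hN Q hQ)

lemma transfer_cp (N : Subgroup G) [N.Normal] (hN : IsCompact (N : Set G))
    (Q : Subgroup G) (hQ : IsClosed (Q : Set G)) :
    (IsCompactlyPresentedGroup Q ↔
      IsCompactlyPresentedGroup (Q.map (QuotientGroup.mk' N))) := by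
  have hker : IsCompact ((((QuotientGroup.mk' N).subgroupMap Q).ker : Subgroup Q) :
      Set Q) := by
    have h1 : ((((QuotientGroup.mk' N).subgroupMap Q).ker : Subgroup Q) : Set Q) =
        ⇑((QuotientGroup.mk' N).subgroupMap Q) ⁻¹' {1} :=
      MonoidHom.coe_ker _
    rw [h1]
    exact hprop_subgroup N hN Q hQ _ isCompact_singleton
  constructor
  · exact cp_image _ (subgroupMap_continuous N Q)
      ((QuotientGroup.mk' N).subgroupMap_surjective Q) hker
  · exact cp_lift _ (subgroupMap_continuous N Q)
      ((QuotientGroup.mk' N).subgroupMap_surjective Q) (hprop_subgroup N hN Q hQ)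

end Main


end CPAux

/-- For a compact normal subgroup `N` of `G` and a class `𝒥` of closed subgroups of `G`
with image class `𝒦` in `G/N`, the group `G` is `𝒥`-coherent iff `G/N` is `𝒦`-coherent. -/
theorem jCoherent_iff_quotient_jCoherent
    {G : Type u} [Group G] [TopologicalSpace G] [IsTopologicalGroup G] [T2Space G]
    (N : Subgroup G) [N.Normal] (hN : IsCompact (N : Set G))
    (𝒥 : Set (Subgroup G)) (h𝒥 : ∀ Q ∈ 𝒥, IsClosed (Q : Set G)) :
    (∀ Q ∈ 𝒥, IsCompactlyGeneratedGroup Q → IsCompactlyPresentedGroup Q) ↔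
      (∀ K ∈ {K : Subgroup (G ⧸ N) | ∃ Q ∈ 𝒥, K = Subgroup.map (QuotientGroup.mk' N) Q},
        IsCompactlyGeneratedGroup K → IsCompactlyPresentedGroup K) := by
  constructor
  · intro hJ K hK hKcg
    obtain ⟨Q, hQJ, rfl⟩ := hK
    exact (CPAux.transfer_cp N hN Q (h𝒥 Q hQJ)).1
      (hJ Q hQJ ((CPAux.transfer_cg N hN Q (h𝒥 Q hQJ)).2 hKcg))
  · intro hK Q hQJ hQcg
    exact (CPAux.transfer_cp N hN Q (h𝒥 Q hQJ)).2
      (hK _ ⟨Q, hQJ, rfl⟩ ((CPAux.transfer_cg N hN Q (h𝒥 Q hQJ)).1 hQcg))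
end
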